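/- Let Ω be a Polish space and U : C_b(Ω) → ℝ a convex monotone functional that is continuous from above (U(f_n) → U(f) whenever f_n decreases pointwise to f ∈ C_b(Ω)). Then U is also continuous from below. -/

import Mathlib

open Filter Topology

theorem convex_continuous_from_above_implies_below
    {Ω : Type*} [TopologicalSpace Ω] [PolishSpace Ω]
    (U : BoundedContinuousFunction Ω ℝ → ℝ)
    (hconv : ConvexOn ℝ Set.univ U)
    (hmono : ∀ f g : BoundedContinuousFunction Ω ℝ, (∀ x, f x ≤ g x) → U f ≤ U g)
    (habove : ∀ (f : ℕ → BoundedContinuousFunction Ω ℝ)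
        (g : BoundedContinuousFunction Ω ℝ),
        (∀ n x, f (n + 1) x ≤ f n x) →
        (∀ x, Tendsto (fun n => f n x) atTop (𝓝 (g x))) →
        Tendsto (fun n => U (f n)) atTop (𝓝 (U g))) :
    ∀ (f : ℕ → BoundedContinuousFunction Ω ℝ) (g : BoundedContinuousFunction Ω ℝ),
      (∀ n x, f n x ≤ f (n + 1) x) →
      (∀ x, Tendsto (fun n => f n x) atTop (𝓝 (g x))) →
      Tendsto (fun n => U (f n)) atTop (𝓝 (U g)) := by
  intro f g hincr hg
  -- pointwise monotone and bounded by g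
  have hmonf : ∀ x, Monotone fun n => f n x := fun x =>
    monotone_nat_of_le_succ fun n => hincr n x
  have hle_g : ∀ n x, f n x ≤ g x := fun n x => (hmonf x).ge_of_tendsto (hg x) n
  have hUle : ∀ n, U (f n) ≤ U g := fun n => hmono _ _ (hle_g n)
  have hUmono : Monotone fun n => U (f n) :=
    monotone_nat_of_le_succ fun n => hmono _ _ (hincr n)
  have hbdd : BddAbove (Set.range fun n => U (f n)) := ⟨U g, by rintro _ ⟨n, rfl⟩; exact hUle n⟩
  set L := ⨆ n, U (f n) with hL
  have hLtend : Tendsto (fun n => U (f n)) atTop (𝓝 L) := tendsto_atTop_ciSup hUmono hbdd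
  -- the auxiliary decreasing sequence h n = g + (g - f n)
  set h : ℕ → BoundedContinuousFunction Ω ℝ := fun n => g + (g - f n) with hh
  have hhdec : ∀ n x, h (n + 1) x ≤ h n x := by
    intro n x
    simp only [hh, BoundedContinuousFunction.coe_add, BoundedContinuousFunction.coe_sub,
      Pi.add_apply, Pi.sub_apply]
    linarith [hincr n x]
  have hhtend : ∀ x, Tendsto (fun n => h n x) atTop (𝓝 (g x)) := by
    intro x
    have : Tendsto (fun n => g x + (g x - f n x)) atTop (𝓝 (g x + (g x - g x))) :=
      (tendsto_const_nhds.add (tendsto_const_nhds.sub (hg x)))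
    simpa [hh] using this
  have hUh : Tendsto (fun n => U (h n)) atTop (𝓝 (U g)) := habove h g hhdec hhtend
  -- convexity: U g ≤ ½ U (f n) + ½ U (h n)
  have hkey : ∀ n, U g ≤ (1/2 : ℝ) * U (f n) + (1/2 : ℝ) * U (h n) := by
    intro n
    have heq : (1/2 : ℝ) • f n + (1/2 : ℝ) • h n = g := by
      ext x
      simp only [hh, BoundedContinuousFunction.coe_add, BoundedContinuousFunction.coe_smul,
        BoundedContinuousFunction.coe_sub, Pi.add_apply, Pi.smul_apply, Pi.sub_apply,
        smul_eq_mul]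
      ring
    have := hconv.2 (Set.mem_univ (f n)) (Set.mem_univ (h n))
      (by norm_num : (0:ℝ) ≤ 1/2) (by norm_num : (0:ℝ) ≤ 1/2) (by norm_num)
    rw [heq] at this
    simpa [smul_eq_mul] using this
  -- pass to the limit
  have hlim : Tendsto (fun n => (1/2 : ℝ) * U (f n) + (1/2 : ℝ) * U (h n)) atTop
      (𝓝 ((1/2 : ℝ) * L + (1/2 : ℝ) * U g)) :=
    ((hLtend.const_mul _).add (hUh.const_mul _))
  have hge : U g ≤ (1/2 : ℝ) * L + (1/2 : ℝ) * U g :=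
    le_of_tendsto_of_tendsto' tendsto_const_nhds hlim hkey
  have hLeq : L = U g := le_antisymm (ciSup_le hUle) (by linarith)
  rwa [hLeq] at hLtend
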